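/- Set w_α = γβγ⁻¹αγβα and w_β = γ⁻¹αγβα in F₃. Then Λ₁(α) = Λ_A(w_α⁻¹ α w_α), Λ₁(β) = Λ_A(w_β⁻¹ β w_β), and Λ₁(γ) = Λ_A(α⁻¹ γ α). In particular, the images Λ₁(F₃) and Λ_A(F₃) coincide as subgroups of the permutation group of {0,1}*. -/
import Mathlib


noncomputable section

/-- The action of `Equiv.Perm X` on `X → G` by permuting coordinates. -/
def permAut (X G : Type) [Group G] : Equiv.Perm X →* MulAut (X → G) where
  toFun σ :=
  { toFun := fun f => f ∘ ⇑σ⁻¹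
    invFun := fun f => f ∘ ⇑σ
    left_inv := fun f => by funext x; simp
    right_inv := fun f => by funext x; simp
    map_mul' := fun f g => rfl }
  map_one' := by ext f x; simp
  map_mul' := fun σ τ => by
    ext f x
    simp [Function.comp, mul_inv_rev]

/-- The wreath product `G ≀ C₂` with base alphabet `Bool`. -/
abbrev Wr (G : Type) [Group G] := (Bool → G) ⋊[permAut Bool G] Equiv.Perm Bool

/-- `pair g₀ g₁` is the element `⟨g₀, g₁⟩` of the base group. -/
def pair {G : Type} [Group G] (g₀ g₁ : G) : Bool → G := fun x => bif x then g₁ else g₀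

/-- The nontrivial element of `Sym({0,1})`. -/
def σswap : Equiv.Perm Bool := Equiv.swap false true

namespace TwoRec

/-- The free group on three generators `α`, `β`, `γ`. -/
abbrev F3 := FreeGroup (Fin 3)

def ga : F3 := FreeGroup.of 0
def gb : F3 := FreeGroup.of 1
def gc : F3 := FreeGroup.of 2

/-- The airplane recursion:
`Φ_A(α) = ⟨α⁻¹, γα⟩σ`, `Φ_A(β) = ⟨α, 1⟩`, `Φ_A(γ) = ⟨1, γβγ⁻¹⟩`. -/
def PhiA : F3 →* Wr F3 :=
  FreeGroup.lift ![⟨pair ga⁻¹ (gc * ga), σswap⟩, ⟨pair ga 1, 1⟩,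
    ⟨pair 1 (gc * gb * gc⁻¹), 1⟩]

/-- The twisted rabbit recursion:
`Φ₁(α) = ⟨α⁻¹β⁻¹, γβα⟩σ`, `Φ₁(β) = ⟨βαβ⁻¹, 1⟩`, `Φ₁(γ) = ⟨βαβα⁻¹β⁻¹, 1⟩`. -/
def Phi1 : F3 →* Wr F3 :=
  FreeGroup.lift ![⟨pair (ga⁻¹ * gb⁻¹) (gc * gb * ga), σswap⟩,
    ⟨pair (gb * ga * gb⁻¹) 1, 1⟩, ⟨pair (gb * ga * gb * ga⁻¹ * gb⁻¹) 1, 1⟩]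

/-- The action on finite binary words associated with a wreath recursion `Φ`. -/
def Lam (Φ : F3 →* Wr F3) : F3 → List Bool → List Bool
  | _, [] => []
  | g, x :: v => (Φ g).right x :: Lam Φ ((Φ g).left x) v

/-- `w_α = γβγ⁻¹αγβα`. -/
def wa : F3 := gc * gb * gc⁻¹ * ga * gc * gb * ga

/-- `w_β = γ⁻¹αγβα`. -/
def wb : F3 := gc⁻¹ * ga * gc * gb * ga

end TwoRec

namespace TwoRec

def th : F3 →* F3 :=
  FreeGroup.lift ![wa⁻¹ * ga * wa, wb⁻¹ * gb * wb, ga⁻¹ * gc * ga]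

def thPi : (Bool → F3) →* (Bool → F3) where
  toFun f := th ∘ f
  map_one' := by funext x; simp
  map_mul' f g := by funext x; simp

lemma thPi_comm (s : Equiv.Perm Bool) :
    thPi.comp ((permAut Bool F3) s).toMonoidHom
      = ((permAut Bool F3) s).toMonoidHom.comp thPi := rfl

def Th : Wr F3 →* Wr F3 :=
  SemidirectProduct.map thPi (MonoidHom.id _) (fun s => thPi_comm s)

lemma PhiA_a : PhiA ga = ⟨pair ga⁻¹ (gc * ga), σswap⟩ := by simp [PhiA, ga]
lemma PhiA_b : PhiA gb = ⟨pair ga 1, 1⟩ := by simp [PhiA, gb]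
lemma PhiA_c : PhiA gc = ⟨pair 1 (gc * gb * gc⁻¹), 1⟩ := by simp [PhiA, gc]
lemma Phi1_a : Phi1 ga = ⟨pair (ga⁻¹ * gb⁻¹) (gc * gb * ga), σswap⟩ := by simp [Phi1, ga]
lemma Phi1_b : Phi1 gb = ⟨pair (gb * ga * gb⁻¹) 1, 1⟩ := by simp [Phi1, gb]
lemma Phi1_c : Phi1 gc = ⟨pair (gb * ga * gb * ga⁻¹ * gb⁻¹) 1, 1⟩ := by simp [Phi1, gc]
lemma th_a : th ga = wa⁻¹ * ga * wa := by simp [th, ga]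
lemma th_b : th gb = wb⁻¹ * gb * wb := by simp [th, gb]
lemma th_c : th gc = ga⁻¹ * gc * ga := by simp [th, gc]
lemma permAut_apply (s : Equiv.Perm Bool) (f : Bool → F3) (x : Bool) :
    (permAut Bool F3 s f) x = f (s⁻¹ x) := rfl
lemma σswap_inv : σswap⁻¹ = σswap := by decide
lemma σswap_false : σswap false = true := by decide
lemma σswap_true : σswap true = false := by decide
@[simp] lemma pair_false {G : Type} [Group G] (g₀ g₁ : G) : pair g₀ g₁ false = g₀ := rfl
@[simp] lemma pair_true {G : Type} [Group G] (g₀ g₁ : G) : pair g₀ g₁ true = g₁ := rfl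

lemma keyA : PhiA (th ga) = Th (Phi1 ga) := by
  rw [th_a, Phi1_a]
  apply SemidirectProduct.ext
  · funext x
    simp only [wa, map_mul, map_inv, PhiA_a, PhiA_b, PhiA_c,
      SemidirectProduct.mul_left, SemidirectProduct.inv_left,
      SemidirectProduct.mul_right, SemidirectProduct.inv_right,
      Th, SemidirectProduct.map_left, thPi, MonoidHom.coe_mk, OneHom.coe_mk,
      permAut_apply, Pi.mul_apply, Pi.inv_apply, Function.comp_apply,
      mul_one, one_mul, mul_inv_rev, inv_inv, σswap_inv, inv_one, MulAut.mul_apply, MulAut.one_apply,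
      Equiv.Perm.one_apply, σswap_false, σswap_true, map_mul, map_inv,
      th_a, th_b, th_c]
    cases x <;>
      simp only [MulAut.mul_apply, MulAut.one_apply, permAut_apply, σswap_inv, σswap_false, σswap_true, Equiv.Perm.one_apply, pair_false, pair_true,
        map_mul, map_inv, th_a, th_b, th_c, map_one, wa, wb] <;>
      group
  · simp only [wa, map_mul, map_inv, PhiA_a, PhiA_b, PhiA_c,
      SemidirectProduct.mul_right, SemidirectProduct.inv_right,
      Th, SemidirectProduct.map_right, MonoidHom.id_apply]
    decide

lemma keyB : PhiA (th gb) = Th (Phi1 gb) := by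
  rw [th_b, Phi1_b]
  apply SemidirectProduct.ext
  · funext x
    simp only [wb, map_mul, map_inv, PhiA_a, PhiA_b, PhiA_c,
      SemidirectProduct.mul_left, SemidirectProduct.inv_left,
      SemidirectProduct.mul_right, SemidirectProduct.inv_right,
      Th, SemidirectProduct.map_left, thPi, MonoidHom.coe_mk, OneHom.coe_mk,
      permAut_apply, Pi.mul_apply, Pi.inv_apply, Function.comp_apply,
      mul_one, one_mul, mul_inv_rev, inv_inv, σswap_inv, inv_one, MulAut.mul_apply, MulAut.one_apply,
      Equiv.Perm.one_apply, σswap_false, σswap_true, map_mul, map_inv,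
      th_a, th_b, th_c]
    cases x <;>
      simp only [MulAut.mul_apply, MulAut.one_apply, permAut_apply, σswap_inv, σswap_false, σswap_true, Equiv.Perm.one_apply, pair_false, pair_true,
        map_mul, map_inv, th_a, th_b, th_c, map_one, wa, wb] <;>
      group
  · simp only [wb, map_mul, map_inv, PhiA_a, PhiA_b, PhiA_c,
      SemidirectProduct.mul_right, SemidirectProduct.inv_right,
      Th, SemidirectProduct.map_right, MonoidHom.id_apply]
    decide

lemma keyC : PhiA (th gc) = Th (Phi1 gc) := by
  rw [th_c, Phi1_c]
  apply SemidirectProduct.ext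
  · funext x
    simp only [map_mul, map_inv, PhiA_a, PhiA_b, PhiA_c,
      SemidirectProduct.mul_left, SemidirectProduct.inv_left,
      SemidirectProduct.mul_right, SemidirectProduct.inv_right,
      Th, SemidirectProduct.map_left, thPi, MonoidHom.coe_mk, OneHom.coe_mk,
      permAut_apply, Pi.mul_apply, Pi.inv_apply, Function.comp_apply,
      mul_one, one_mul, mul_inv_rev, inv_inv, σswap_inv, inv_one, MulAut.mul_apply, MulAut.one_apply,
      Equiv.Perm.one_apply, σswap_false, σswap_true,
      th_a, th_b, th_c]
    cases x <;>
      simp only [MulAut.mul_apply, MulAut.one_apply, permAut_apply, σswap_inv, σswap_false, σswap_true, Equiv.Perm.one_apply, pair_false, pair_true,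
        map_mul, map_inv, th_a, th_b, th_c, map_one, wa, wb] <;>
      group
  · simp only [map_mul, map_inv, PhiA_a, PhiA_b, PhiA_c,
      SemidirectProduct.mul_right, SemidirectProduct.inv_right,
      Th, SemidirectProduct.map_right, MonoidHom.id_apply]
    decide

lemma key : PhiA.comp th = Th.comp Phi1 := by
  apply FreeGroup.ext_hom
  intro i
  fin_cases i
  · exact keyA
  · exact keyB
  · exact keyC

lemma lam_th : ∀ (v : List Bool) (g : F3), Lam Phi1 g v = Lam PhiA (th g) v
  | [], _ => rfl
  | x :: v, g => by
    have hk : PhiA (th g) = Th (Phi1 g) := DFunLike.congr_fun key g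
    rw [Lam, Lam, hk]
    have h1 : (Th (Phi1 g)).right = (Phi1 g).right := rfl
    have h2 : (Th (Phi1 g)).left x = th ((Phi1 g).left x) := rfl
    rw [h1, h2, ← lam_th v ((Phi1 g).left x)]

/-- preimages under θ -/
def Ua : F3 := gc * gb * ga * gb * ga * gb⁻¹ * ga⁻¹ * gb⁻¹ * gc⁻¹
def Ub : F3 := Ua * (gb * ga * gb * ga⁻¹ * gb⁻¹) *
  (gc * gb * ga * gb * ga⁻¹ * gb⁻¹ * ga⁻¹ * gb⁻¹ * gc⁻¹)
def Uc : F3 := (Ua * (gb * ga * gb * ga⁻¹ * gb⁻¹ * ga⁻¹ * gb⁻¹ * gc⁻¹))⁻¹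

def psi : F3 →* F3 := FreeGroup.lift ![Ua, Ub, Uc]

lemma psi_a : psi ga = Ua := by simp [psi, ga]
lemma psi_b : psi gb = Ub := by simp [psi, gb]
lemma psi_c : psi gc = Uc := by simp [psi, gc]

lemma th_psi : th.comp psi = MonoidHom.id F3 := by
  apply FreeGroup.ext_hom
  intro i
  fin_cases i
  · show th (psi ga) = ga
    rw [psi_a]
    simp only [Ua, map_mul, map_inv, th_a, th_b, th_c, wa, wb]
    group
  · show th (psi gb) = gb
    rw [psi_b]
    simp only [Ub, Ua, map_mul, map_inv, th_a, th_b, th_c, wa, wb]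
    group
  · show th (psi gc) = gc
    rw [psi_c]
    simp only [Uc, Ua, map_mul, map_inv, th_a, th_b, th_c, wa, wb]
    group
end TwoRec

open TwoRec in
theorem stmt8 :
    Lam Phi1 ga = Lam PhiA (wa⁻¹ * ga * wa) ∧
    Lam Phi1 gb = Lam PhiA (wb⁻¹ * gb * wb) ∧
    Lam Phi1 gc = Lam PhiA (ga⁻¹ * gc * ga) ∧
    Set.range (Lam Phi1) = Set.range (Lam PhiA) := by
  refine ⟨?_, ?_, ?_, ?_⟩
  · funext v; rw [← th_a]; exact lam_th v ga
  · funext v; rw [← th_b]; exact lam_th v gb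
  · funext v; rw [← th_c]; exact lam_th v gc
  · apply subset_antisymm
    · rintro f ⟨g, rfl⟩
      exact ⟨th g, funext fun v => (lam_th v g).symm⟩
    · rintro f ⟨g, rfl⟩
      refine ⟨psi g, ?_⟩
      funext v
      rw [lam_th v (psi g), show th (psi g) = g from DFunLike.congr_fun th_psi g]
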